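/- Let X be an infinite-dimensional real Banach space and let (A_n) be an approximation scheme in X. Suppose there exist a real Banach space Y and an injective continuous linear map ι : Y → X whose range is a proper subset of X, such that ⋃_n A_n ⊆ range(ι), and for every n ∈ ℕ there exists a constant b_n > 0 with ‖y‖_Y ≤ b_n · ‖ι(y)‖_X whenever ι(y) ∈ A_n (a Bernstein-type inequality). Then (X,(A_n)) satisfies Shapiro's Theorem. -/

import Mathlib

open Metric Filter

/-- `(A n)` together with the map `K` is an approximation scheme in `X`. -/
structure IsApproximationScheme {X : Type*} [NormedAddCommGroup X] [NormedSpace ℝ X]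
    (A : ℕ → Set X) (K : ℕ → ℕ) : Prop where
  subset_succ : ∀ n, A n ⊆ A (n + 1)
  ne_succ : ∀ n, A n ≠ A (n + 1)
  le_K : ∀ n, n ≤ K n
  add_mem : ∀ n, ∀ x ∈ A n, ∀ y ∈ A n, x + y ∈ A (K n)
  smul_mem : ∀ n (c : ℝ), ∀ x ∈ A n, c • x ∈ A n
  dense_union : Dense (⋃ n, A n)

/-- `(X, (A n))` satisfies Shapiro's Theorem: for every nonincreasing positive sequence
`ε` converging to `0` there is `x` with `E(x, A n) ≠ O(ε n)`. -/
def SatisfiesShapiro {X : Type*} [NormedAddCommGroup X] (A : ℕ → Set X) : Prop :=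
  ∀ ε : ℕ → ℝ, (∀ n, 0 < ε n) → Antitone ε → Tendsto ε atTop (nhds 0) →
    ∃ x : X, ¬ ∃ M : ℝ, ∀ n, infDist x (A n) ≤ M * ε n

/-- `E(B, A) = sup_{b ∈ B} E(b, A)`. -/
noncomputable def setApproxError {X : Type*} [NormedAddCommGroup X] (B A : Set X) : ℝ :=
  ⨆ b : B, infDist (b : X) A

/-- `dens_n`-style quantity: `E(S(X), A) = sup_{‖x‖ = 1} E(x, A)`. -/
noncomputable def sphDist {X : Type*} [NormedAddCommGroup X] (A : Set X) : ℝ :=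
  ⨆ x : {x : X // ‖x‖ = 1}, infDist (x : X) A

theorem stmt14 {X : Type*} [NormedAddCommGroup X] [NormedSpace ℝ X] [CompleteSpace X]
    (hX : ¬ FiniteDimensional ℝ X) (A : ℕ → Set X) (K : ℕ → ℕ)
    (hA : IsApproximationScheme A K)
    {Y : Type*} [NormedAddCommGroup Y] [NormedSpace ℝ Y] [CompleteSpace Y]
    (ι : Y →L[ℝ] X) (hinj : Function.Injective ι)
    (hproper : Set.range ι ≠ Set.univ)
    (hsub : (⋃ n, A n) ⊆ Set.range ι)
    (hbern : ∀ n : ℕ, ∃ b : ℝ, 0 < b ∧ ∀ y : Y, ι y ∈ A n → ‖y‖ ≤ b * ‖ι y‖) :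
    SatisfiesShapiro A := by
  intro ε hpos hanti htend
  by_contra hcon
  push_neg at hcon
  -- basic facts about the scheme
  have mono : Monotone A := monotone_nat_of_le_succ hA.subset_succ
  have hne1 : (A 1).Nonempty := by
    rcases Set.not_subset.mp
        (fun hle => hA.ne_succ 0 (subset_antisymm (hA.subset_succ 0) hle)) with ⟨x, hx, -⟩
    exact ⟨x, hx⟩
  have hzero : ∀ n, 1 ≤ n → (0 : X) ∈ A n := by
    intro n hn
    rcases hne1 with ⟨x, hx⟩
    have h0 : (0 : ℝ) • x ∈ A 1 := hA.smul_mem 1 0 x hx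
    rw [zero_smul] at h0
    exact mono hn h0
  -- Baire category argument
  set F : ℕ → Set X := fun M => {x | ∀ n, infDist x (A n) ≤ M * ε n} with hF
  have hclosed : ∀ M, IsClosed (F M) := by
    intro M
    have hEq : F M = ⋂ n, {x | infDist x (A n) ≤ M * ε n} := by
      ext x; simp [hF, Set.mem_iInter]
    rw [hEq]
    exact isClosed_iInter fun n => isClosed_le (continuous_infDist_pt _) continuous_const
  have hunion : ⋃ M, F M = Set.univ := by
    ext x
    simp only [Set.mem_iUnion, Set.mem_univ, iff_true]
    rcases hcon x with ⟨M, hM⟩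
    refine ⟨⌈max M 0⌉₊, fun n => (hM n).trans ?_⟩
    exact mul_le_mul_of_nonneg_right ((le_max_left M 0).trans (Nat.le_ceil _)) (hpos n).le
  obtain ⟨M, hMint⟩ := nonempty_interior_of_iUnion_of_closed hclosed hunion
  rcases hMint with ⟨x₀, hx₀⟩
  rcases Metric.isOpen_iff.mp isOpen_interior x₀ hx₀ with ⟨r, hr, hball⟩
  have hballF : ball x₀ r ⊆ F M := hball.trans interior_subset
  -- uniform bound:  E(z, A (K n)) ≤ (4M/r) ε_n ‖z‖
  have huniform : ∀ n, 1 ≤ n → ∀ z : X,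
      infDist z (A (K n)) ≤ 4 * (M : ℝ) / r * ε n * ‖z‖ := by
    intro n hn z
    have hKn1 : 1 ≤ K n := hn.trans (hA.le_K n)
    rcases eq_or_ne z 0 with rfl | hz
    · simp [infDist_zero_of_mem (hzero _ hKn1)]
    refine le_of_forall_pos_le_add fun δ hδ => ?_
    have hz' : 0 < ‖z‖ := norm_pos_iff.mpr hz
    set δ' : ℝ := r * δ / (4 * ‖z‖) with hδ'
    have hδ'pos : 0 < δ' := by positivity
    set c : ℝ := r / 2 / ‖z‖ with hc
    have hcpos : 0 < c := by positivity
    have hw : ‖c • z‖ = r / 2 := by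
      rw [norm_smul, Real.norm_eq_abs, abs_of_pos hcpos, hc]
      field_simp
    have hmem1 : x₀ + c • z ∈ F M := by
      apply hballF
      rw [mem_ball, dist_eq_norm, add_sub_cancel_left, hw]
      linarith
    have hmem0 : x₀ ∈ F M := hballF (mem_ball_self hr)
    have hAn : (A n).Nonempty := ⟨0, hzero n hn⟩
    have h1 : infDist (x₀ + c • z) (A n) < (M : ℝ) * ε n + δ' :=
      lt_of_le_of_lt (hmem1 n) (by linarith)
    have h0 : infDist x₀ (A n) < (M : ℝ) * ε n + δ' :=
      lt_of_le_of_lt (hmem0 n) (by linarith)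
    rcases (infDist_lt_iff hAn).mp h1 with ⟨a, ha, hda⟩
    rcases (infDist_lt_iff hAn).mp h0 with ⟨a', ha', hda'⟩
    have hmemK : c⁻¹ • (a + (-1 : ℝ) • a') ∈ A (K n) :=
      hA.smul_mem _ _ _ (hA.add_mem n a ha _ (hA.smul_mem n (-1) a' ha'))
    have key : z - c⁻¹ • (a + (-1 : ℝ) • a') = c⁻¹ • (c • z - (a - a')) := by
      rw [smul_sub, inv_smul_smul₀ hcpos.ne', neg_one_smul, ← sub_eq_add_neg, smul_sub]
    have hdiff : ‖c • z - (a - a')‖ ≤ 2 * ((M : ℝ) * ε n + δ') := by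
      have hEq : c • z - (a - a') = (x₀ + c • z - a) - (x₀ - a') := by abel
      rw [hEq]
      have h1' : ‖(x₀ + c • z - a) - (x₀ - a')‖ ≤ ‖x₀ + c • z - a‖ + ‖x₀ - a'‖ :=
        norm_sub_le _ _
      rw [← dist_eq_norm (x₀ + c • z) a, ← dist_eq_norm x₀ a'] at h1'
      linarith
    have hcinv : |c⁻¹| = 2 * ‖z‖ / r := by
      rw [abs_of_pos (inv_pos.mpr hcpos), hc]
      field_simp
    calc infDist z (A (K n)) ≤ dist z (c⁻¹ • (a + (-1 : ℝ) • a')) :=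
          infDist_le_dist_of_mem hmemK
      _ = |c⁻¹| * ‖c • z - (a - a')‖ := by
          rw [dist_eq_norm, key, norm_smul, Real.norm_eq_abs]
      _ ≤ 2 * ‖z‖ / r * (2 * ((M : ℝ) * ε n + δ')) := by
          rw [hcinv]
          exact mul_le_mul_of_nonneg_left hdiff (by positivity)
      _ = 4 * (M : ℝ) / r * ε n * ‖z‖ + δ := by
          rw [hδ']
          field_simp
          ring
  -- choose a level with uniform relative error 1/4
  have hC : Tendsto (fun n => 4 * (M : ℝ) / r * ε n) atTop (nhds 0) := by
    simpa using htend.const_mul (4 * (M : ℝ) / r)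
  rcases ((hC.eventually_lt_const (by norm_num : (0 : ℝ) < 1 / 4)).and
      (eventually_ge_atTop 1)).exists with ⟨n₀, hsmall, hn₀⟩
  set m := K n₀ with hm
  have hm1 : 1 ≤ m := hn₀.trans (hA.le_K n₀)
  have hAm : (A m).Nonempty := ⟨0, hzero m hm1⟩
  -- every z is approximable in A m with relative error 1/2
  have happrox : ∀ z : X, ∃ a, a ∈ A m ∧ ‖z - a‖ ≤ 1 / 2 * ‖z‖ := by
    intro z
    rcases eq_or_ne z 0 with rfl | hz
    · exact ⟨0, hzero m hm1, by simp⟩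
    have hz' : 0 < ‖z‖ := norm_pos_iff.mpr hz
    have h1 : infDist z (A m) < 1 / 2 * ‖z‖ := by
      calc infDist z (A m) ≤ 4 * (M : ℝ) / r * ε n₀ * ‖z‖ := huniform n₀ hn₀ z
        _ < 1 / 4 * ‖z‖ := by
            apply mul_lt_mul_of_pos_right hsmall hz'
        _ < 1 / 2 * ‖z‖ := by linarith
    rcases (infDist_lt_iff hAm).mp h1 with ⟨a, ha, hda⟩
    exact ⟨a, ha, by rw [← dist_eq_norm]; exact hda.le⟩
  choose g hgmem hgle using happrox
  -- Bernstein constant for level m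
  rcases hbern m with ⟨b, hb, hbern'⟩
  -- a point outside the range
  obtain ⟨x, hx⟩ : ∃ x : X, x ∉ Set.range ι := by
    by_contra h
    push_neg at h
    exact hproper (Set.eq_univ_of_forall h)
  -- the recursive remainders
  let rs : ℕ → X := fun k => Nat.rec x (fun _ rk => rk - g rk) k
  have hrs0 : rs 0 = x := rfl
  have hrsS : ∀ k, rs (k + 1) = rs k - g (rs k) := fun k => rfl
  have hrnorm : ∀ k, ‖rs k‖ ≤ (1 / 2) ^ k * ‖x‖ := by
    intro k
    induction k with
    | zero => simp [hrs0]
    | succ k ih =>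
      have h1 : ‖rs (k + 1)‖ ≤ 1 / 2 * ‖rs k‖ := by
        rw [hrsS]; exact hgle (rs k)
      calc ‖rs (k + 1)‖ ≤ 1 / 2 * ‖rs k‖ := h1
        _ ≤ 1 / 2 * ((1 / 2) ^ k * ‖x‖) := by linarith
        _ = (1 / 2) ^ (k + 1) * ‖x‖ := by ring
  -- lift the approximants to Y
  have hay : ∀ k, ∃ y : Y, ι y = g (rs k) := fun k =>
    hsub (Set.mem_iUnion.mpr ⟨m, hgmem (rs k)⟩)
  choose ys hys using hay
  have hynorm : ∀ k, ‖ys k‖ ≤ 2 * b * ‖x‖ * (1 / 2) ^ k := by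
    intro k
    have hp : (0 : ℝ) ≤ (1 / 2 : ℝ) ^ k := by positivity
    have h1 : ‖ι (ys k)‖ ≤ 2 * ((1 / 2) ^ k * ‖x‖) := by
      rw [hys k]
      have hEq : g (rs k) = rs k - rs (k + 1) := by rw [hrsS]; abel
      rw [hEq]
      calc ‖rs k - rs (k + 1)‖ ≤ ‖rs k‖ + ‖rs (k + 1)‖ := norm_sub_le _ _
        _ ≤ (1 / 2) ^ k * ‖x‖ + (1 / 2) ^ (k + 1) * ‖x‖ :=
            add_le_add (hrnorm k) (hrnorm (k + 1))
        _ ≤ 2 * ((1 / 2) ^ k * ‖x‖) := by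
            have hnx := norm_nonneg x
            have : ((1:ℝ) / 2) ^ (k + 1) = 1 / 2 * (1 / 2) ^ k := by ring
            nlinarith
    calc ‖ys k‖ ≤ b * ‖ι (ys k)‖ := hbern' (ys k) (by rw [hys]; exact hgmem (rs k))
      _ ≤ b * (2 * ((1 / 2) ^ k * ‖x‖)) := mul_le_mul_of_nonneg_left h1 hb.le
      _ = 2 * b * ‖x‖ * (1 / 2) ^ k := by ring
  -- summability
  have hsum : Summable ys := by
    apply Summable.of_norm_bounded ?_ hynorm
    exact (summable_geometric_of_lt_one (by norm_num) (by norm_num)).mul_left (2 * b * ‖x‖)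
  -- the limit and the contradiction
  have hhsι : HasSum (fun k => ι (ys k)) (ι (∑' k, ys k)) := hsum.hasSum.mapL ι
  have hpart : ∀ k, ∑ i ∈ Finset.range k, ι (ys i) = x - rs k := by
    intro k
    induction k with
    | zero => simp [hrs0]
    | succ k ih =>
      rw [Finset.sum_range_succ, ih, hys, hrsS]
      abel
  have hr0 : Tendsto rs atTop (nhds 0) := by
    apply squeeze_zero_norm hrnorm
    simpa using
      (tendsto_pow_atTop_nhds_zero_of_lt_one (by norm_num : (0:ℝ) ≤ 1 / 2)
        (by norm_num)).mul_const ‖x‖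
  have hlim : Tendsto (fun k => x - rs k) atTop (nhds x) := by
    simpa using tendsto_const_nhds.sub hr0
  have hfinal : ι (∑' k, ys k) = x :=
    tendsto_nhds_unique (by simpa [hpart] using hhsι.tendsto_sum_nat) hlim
  exact hx ⟨_, hfinal⟩
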